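/- Let A be a perinormal ring and B an integral unibranched overring of A. Then A = B. -/

import Mathlib

/-- Going down for a ring homomorphism. -/
def GoingDown {R S : Type*} [CommRing R] [CommRing S] (f : R →+* S) : Prop :=
  ∀ (P₁ P₂ : Ideal R), P₁.IsPrime → P₂.IsPrime → P₁ ≤ P₂ →
    ∀ Q₂ : Ideal S, Q₂.IsPrime → Q₂.comap f = P₂ →
      ∃ Q₁ : Ideal S, Q₁.IsPrime ∧ Q₁ ≤ Q₂ ∧ Q₁.comap f = P₁

/-- A ring is perinormal if every going-down overring is flat. -/
def Perinormal (A : Type*) [CommRing A] : Prop :=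
  ∀ B : Subalgebra A (Localization (nonZeroDivisors A)),
    GoingDown (algebraMap A B) → Module.Flat A B

universe u

set_option maxHeartbeats 1000000 in
set_option synthInstance.maxHeartbeats 400000 in
lemma richman_aux {A : Type u} [CommRing A]
    (B : Subalgebra A (Localization (nonZeroDivisors A)))
    [Module.Flat A ↥B]
    (hsurj : Function.Surjective (PrimeSpectrum.comap (algebraMap A ↥B))) :
    B ≤ ⊥ := by
  classical
  intro x hx
  rw [Algebra.mem_bot]
  obtain ⟨⟨a, s⟩, hmk⟩ := IsLocalization.mk'_surjective (nonZeroDivisors A) x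
  dsimp only at hmk
  set b : B := ⟨x, hx⟩ with hb
  have hsx : algebraMap A (Localization (nonZeroDivisors A)) (s : A) * x
      = algebraMap A (Localization (nonZeroDivisors A)) a := by
    rw [← hmk, mul_comm, IsLocalization.mk'_spec]
  -- the relation s • b + (-a) • 1 = 0 in B
  have key : (s : A) • b + (-a) • (1 : B) = 0 := by
    apply Subtype.ext
    have h0 : ((s : A) • b + (-a) • (1 : B) : B).val
        = (s : A) • x + (-a) • (1 : Localization (nonZeroDivisors A)) := by
      simp [hb]
    rw [h0, Algebra.smul_def, Algebra.smul_def, mul_one, map_neg, hsx]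
    simp
  have hrel : ∑ i : ULift.{u} (Fin 2),
      (![(s : A), -a] i.down) • (![b, 1] i.down) = 0 := by
    calc ∑ i : ULift.{u} (Fin 2), (![(s : A), -a] i.down) • (![b, 1] i.down)
        = ∑ i : Fin 2, ![(s : A), -a] i • ![b, (1 : B)] i :=
          Equiv.ulift.sum_comp (fun i : Fin 2 => ![(s : A), -a] i • ![b, (1 : B)] i)
      _ = 0 := by simpa [Fin.sum_univ_two] using key
  obtain ⟨κ, c, y, hxy, hfc⟩ := Module.Flat.isTrivialRelation_of_sum_smul_eq_zero hrel
  set d : Fin κ → A := fun j => c ⟨1⟩ j with hd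
  set e : Fin κ → A := fun j => c ⟨0⟩ j with he
  -- for each j : s * e j = a * d j
  have hse : ∀ j, (s : A) * e j = a * d j := by
    intro j
    have h1 := hfc j
    have h2 : ∑ i : ULift.{u} (Fin 2), ![(s : A), -a] i.down * c i j
        = ∑ i : Fin 2, ![(s : A), -a] i * c ⟨i⟩ j :=
      Equiv.ulift.sum_comp (fun i : Fin 2 => ![(s : A), -a] i * c ⟨i⟩ j)
    rw [h2] at h1
    rw [Fin.sum_univ_two] at h1
    simp only [Matrix.cons_val_zero, Matrix.cons_val_one, Matrix.head_cons, neg_mul] at h1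
    simp only [hd, he]
    linear_combination h1
  -- 1 = ∑ d j • y j in B
  have hone : (1 : B) = ∑ j, d j • y j := by
    simpa using hxy ⟨1⟩
  -- the ideal generated by the d j is the unit ideal
  have hI : Ideal.span (Set.range d) = ⊤ := by
    by_contra hne
    obtain ⟨m, hm, hIm⟩ := Ideal.exists_le_maximal _ hne
    obtain ⟨Q, hQ⟩ := hsurj ⟨m, hm.isPrime⟩
    have hQm : Q.asIdeal.comap (algebraMap A ↥B) = m :=
      congrArg PrimeSpectrum.asIdeal hQ
    have h1 : (1 : B) ∈ Q.asIdeal := by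
      rw [hone]
      refine Ideal.sum_mem _ fun j _ => ?_
      have hdj : d j ∈ m := hIm (Ideal.subset_span ⟨j, rfl⟩)
      have : algebraMap A ↥B (d j) ∈ Q.asIdeal := by
        rw [← hQm] at hdj; exact hdj
      rw [Algebra.smul_def]
      exact Q.asIdeal.mul_mem_right _ this
    exact Q.isPrime.ne_top (Q.asIdeal.eq_top_iff_one.mpr h1)
  -- extract a partition of unity
  have h1mem : (1 : A) ∈ Ideal.span (Set.range d) := hI ▸ Submodule.mem_top
  obtain ⟨g, hg⟩ := (Submodule.mem_span_range_iff_exists_fun A).mp h1mem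
  -- in the localization, algebraMap (d j) * x = algebraMap (e j)
  have hde : ∀ j, algebraMap A (Localization (nonZeroDivisors A)) (d j) * x
      = algebraMap A (Localization (nonZeroDivisors A)) (e j) := by
    intro j
    have hu : IsUnit (algebraMap A (Localization (nonZeroDivisors A)) (s : A)) :=
      IsLocalization.map_units _ s
    rw [← hu.mul_right_inj]
    calc algebraMap A _ (s : A) * (algebraMap A _ (d j) * x)
        = algebraMap A _ (d j) * (algebraMap A _ (s : A) * x) := by ring
      _ = algebraMap A _ (d j) * algebraMap A _ a := by rw [hsx]
      _ = algebraMap A _ (a * d j) := by rw [map_mul]; ring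
      _ = algebraMap A _ ((s : A) * e j) := by rw [hse j]
      _ = algebraMap A _ (s : A) * algebraMap A _ (e j) := by rw [map_mul]
  refine ⟨∑ j, g j * e j, ?_⟩
  calc algebraMap A _ (∑ j, g j * e j)
      = ∑ j, algebraMap A (Localization (nonZeroDivisors A)) (g j) *
        (algebraMap A _ (d j) * x) := by
        rw [map_sum]
        exact Finset.sum_congr rfl fun j _ => by rw [hde j, map_mul]
    _ = (∑ j, g j * d j) • x := by
        rw [Finset.sum_smul]
        exact (Finset.sum_congr rfl fun j _ => by
          rw [Algebra.smul_def, map_mul, mul_assoc]).symm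
    _ = x := by simp only [smul_eq_mul] at hg; rw [hg, one_smul]

theorem statement4 (A : Type*) [CommRing A] (hA : Perinormal A)
    (B : Subalgebra A (Localization (nonZeroDivisors A))) [Algebra.IsIntegral A B]
    (hbij : Function.Bijective (PrimeSpectrum.comap (algebraMap A B))) :
    B = ⊥ := by
  classical
  -- Step 1: the extension satisfies going down
  have gd : GoingDown (algebraMap A B) := by
    intro P₁ P₂ hP₁ hP₂ hle Q₂ hQ₂ hcomap
    obtain ⟨Q₁p, hQ₁p⟩ := hbij.2 ⟨P₁, hP₁⟩
    have h1 : Q₁p.asIdeal.comap (algebraMap A ↥B) = P₁ :=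
      congrArg PrimeSpectrum.asIdeal hQ₁p
    obtain ⟨Q', hQ'le, hQ'prime, hQ'comap⟩ :=
      Ideal.exists_ideal_over_prime_of_isIntegral P₂ Q₁p.asIdeal (by rw [h1]; exact hle)
    have heq : (⟨Q', hQ'prime⟩ : PrimeSpectrum B) = ⟨Q₂, hQ₂⟩ := by
      apply hbij.1
      apply PrimeSpectrum.ext
      simpa using hQ'comap.trans hcomap.symm
    refine ⟨Q₁p.asIdeal, Q₁p.isPrime, ?_, h1⟩
    have : Q' = Q₂ := congrArg PrimeSpectrum.asIdeal heq
    exact this ▸ hQ'le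
  -- Step 2: flatness
  haveI hflat : Module.Flat A B := hA B gd
  -- Step 3: equality
  exact le_antisymm (richman_aux B hbij.2) bot_le
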